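/- Let G = (V, E) be a finite connected weighted graph with symmetric conductances c ≥ 0 and energy E(f) = (1/2)∑_{x,y} c(x,y)(f(x)-f(y))². Let u be harmonic off a boundary set V₀ with u|_{V₀} taking only values 0 and 1. Then for every edge {x, y}: c(x,y)|u(x) - u(y)| ≤ E(u). -/

import Mathlib

open Finset

private lemma antisym_double_sum {V : Type*} [Fintype V] (s : Finset V) (f : V → V → ℝ)
    (h : ∀ x y, f x y = - f y x) : ∑ x ∈ s, ∑ y ∈ s, f x y = 0 := by
  have h1 : ∑ x ∈ s, ∑ y ∈ s, f x y = ∑ x ∈ s, ∑ y ∈ s, - f x y := by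
    rw [Finset.sum_comm]
    exact Finset.sum_congr rfl fun x _ => Finset.sum_congr rfl fun y _ => h y x
  have h2 : ∑ x ∈ s, ∑ y ∈ s, - f x y = - ∑ x ∈ s, ∑ y ∈ s, f x y := by
    simp
  linarith

private lemma energy_eq {V : Type*} [Fintype V] (c : V → V → ℝ)
    (hsym : ∀ x y, c x y = c y x) (u : V → ℝ) :
    ∑ x, ∑ y, c x y * (u x - u y) ^ 2
      = 2 * ∑ x, u x * ∑ y, c x y * (u x - u y) := by
  have h0 : ∑ x, ∑ y, c x y * (u y ^ 2 - u x ^ 2) = 0 :=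
    antisym_double_sum univ _ (fun x y => by rw [hsym x y]; ring)
  have h1 : ∑ x, ∑ y, c x y * (u x - u y) ^ 2
      - 2 * ∑ x, u x * ∑ y, c x y * (u x - u y)
      = ∑ x, ∑ y, c x y * (u y ^ 2 - u x ^ 2) := by
    rw [Finset.mul_sum, ← Finset.sum_sub_distrib]
    apply Finset.sum_congr rfl
    intro x _
    rw [Finset.mul_sum, Finset.mul_sum, ← Finset.sum_sub_distrib]
    exact Finset.sum_congr rfl fun y _ => by ring
  linarith

private lemma exists_boundary_max {V : Type*} [Fintype V] [DecidableEq V] [Nonempty V]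
    (c : V → V → ℝ) (hsym : ∀ x y, c x y = c y x) (hnonneg : ∀ x y, 0 ≤ c x y)
    (hconn : (SimpleGraph.fromRel fun x y => 0 < c x y).Connected)
    (V₀ : Finset V) (u : V → ℝ)
    (hharm : ∀ x, x ∉ V₀ → ∑ y, c x y * (u x - u y) = 0)
    (hne : V₀.Nonempty) :
    ∃ w ∈ V₀, ∀ z, u z ≤ u w := by
  obtain ⟨x₀, -, hx₀⟩ := Finset.exists_max_image Finset.univ u
    ⟨Classical.arbitrary V, mem_univ _⟩
  obtain ⟨v₀, hv₀⟩ := hne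
  have key : ∀ p q : V, (SimpleGraph.fromRel fun x y => 0 < c x y).Walk p q →
      u p = u x₀ → q ∈ V₀ → ∃ w ∈ V₀, u w = u x₀ := by
    intro p q w
    induction w with
    | nil => exact fun h hq => ⟨_, hq, h⟩
    | @cons a b cc hab w ih =>
      intro ha hq
      by_cases haV : a ∈ V₀
      · exact ⟨a, haV, ha⟩
      · have hsum := hharm a haV
        have hnn : ∀ y ∈ univ, 0 ≤ c a y * (u a - u y) := fun y _ =>
          mul_nonneg (hnonneg a y)
            (by have := hx₀ y (mem_univ y); rw [ha]; linarith)
        have hzero := (Finset.sum_eq_zero_iff_of_nonneg hnn).mp hsum b (mem_univ b)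
        have hcab : 0 < c a b := by
          rw [SimpleGraph.fromRel_adj] at hab
          rcases hab.2 with h | h
          · exact h
          · rw [hsym]; exact h
        have hub : u b = u x₀ := by
          rcases mul_eq_zero.mp hzero with h | h
          · exact absurd h (ne_of_gt hcab)
          · linarith
        exact ih hub hq
  obtain ⟨w, hw, hwv⟩ := key x₀ v₀ (hconn x₀ v₀).some rfl hv₀
  exact ⟨w, hw, fun z => hwv ▸ hx₀ z (mem_univ z)⟩

private lemma core_ineq {V : Type*} [Fintype V] [DecidableEq V]
    (c : V → V → ℝ) (hsym : ∀ x y, c x y = c y x) (hnonneg : ∀ x y, 0 ≤ c x y)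
    (V₀ : Finset V) (u : V → ℝ)
    (hharm : ∀ x, x ∉ V₀ → ∑ y, c x y * (u x - u y) = 0)
    (hbdry : ∀ x ∈ V₀, u x = 0 ∨ u x = 1)
    (h0 : ∀ z, 0 ≤ u z) (h1 : ∀ z, u z ≤ 1)
    (x y : V) (hxy : u y < u x) :
    c x y * (u x - u y) ≤ ∑ z, u z * ∑ w, c z w * (u z - u w) := by
  classical
  set a := u x with ha
  have ha0 : 0 < a := lt_of_le_of_lt (h0 y) hxy
  have ha1 : a ≤ 1 := h1 x
  -- step 1 : total = sum over S of divergence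
  have step1 : ∑ z, u z * ∑ w, c z w * (u z - u w)
      = ∑ z ∈ univ.filter (fun z => a ≤ u z), ∑ w, c z w * (u z - u w) := by
    rw [← Finset.sum_filter_add_sum_filter_not univ (fun z => a ≤ u z)
      (fun z => u z * ∑ w, c z w * (u z - u w))]
    have hB : ∑ z ∈ univ.filter (fun z => ¬ a ≤ u z),
        u z * ∑ w, c z w * (u z - u w) = 0 := by
      apply Finset.sum_eq_zero
      intro z hz
      rw [Finset.mem_filter] at hz
      by_cases hzV : z ∈ V₀
      · rcases hbdry z hzV with h | h
        · rw [h, zero_mul]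
        · exact absurd (by rw [h]; exact ha1) hz.2
      · rw [hharm z hzV, mul_zero]
    rw [hB, add_zero]
    apply Finset.sum_congr rfl
    intro z hz
    rw [Finset.mem_filter] at hz
    by_cases hzV : z ∈ V₀
    · rcases hbdry z hzV with h | h
      · exfalso; rw [h] at hz; linarith [hz.2]
      · rw [h, one_mul]
    · rw [hharm z hzV, mul_zero]
  -- step 2 : sum over S of divergence = flux across level set
  have step2 : ∑ z ∈ univ.filter (fun z => a ≤ u z), ∑ w, c z w * (u z - u w)
      = ∑ z ∈ univ.filter (fun z => a ≤ u z),
          ∑ w ∈ univ.filter (fun w => ¬ a ≤ u w), c z w * (u z - u w) := by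
    have hsplit : ∀ z : V, ∑ w, c z w * (u z - u w)
        = ∑ w ∈ univ.filter (fun w => a ≤ u w), c z w * (u z - u w)
          + ∑ w ∈ univ.filter (fun w => ¬ a ≤ u w), c z w * (u z - u w) := fun z =>
      (Finset.sum_filter_add_sum_filter_not univ (fun w => a ≤ u w) _).symm
    rw [Finset.sum_congr rfl fun z _ => hsplit z, Finset.sum_add_distrib,
      antisym_double_sum (univ.filter (fun z => a ≤ u z))
        (fun z w => c z w * (u z - u w)) (fun p q => by
          show c p q * (u p - u q) = -(c q p * (u q - u p))
          rw [hsym p q]; ring),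
      zero_add]
  rw [step1, step2]
  -- step 3 : single term bound
  have hyS : y ∈ univ.filter (fun w => ¬ a ≤ u w) := by
    simp only [Finset.mem_filter, mem_univ, true_and]
    exact not_le.mpr hxy
  have hxS : x ∈ univ.filter (fun z => a ≤ u z) := by
    simp only [Finset.mem_filter, mem_univ, true_and]
    exact le_of_eq ha
  have hnn : ∀ z ∈ univ.filter (fun z => a ≤ u z),
      ∀ w ∈ univ.filter (fun w => ¬ a ≤ u w), 0 ≤ c z w * (u z - u w) := by
    intro z hz w hw
    rw [Finset.mem_filter] at hz hw
    have := not_le.mp hw.2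
    exact mul_nonneg (hnonneg z w) (by linarith [hz.2])
  calc c x y * (u x - u y)
      ≤ ∑ w ∈ univ.filter (fun w => ¬ a ≤ u w), c x w * (u x - u w) :=
        Finset.single_le_sum (fun w hw => hnn x hxS w hw) hyS
    _ ≤ ∑ z ∈ univ.filter (fun z => a ≤ u z),
          ∑ w ∈ univ.filter (fun w => ¬ a ≤ u w), c z w * (u z - u w) :=
        Finset.single_le_sum
          (fun z hz => Finset.sum_nonneg fun w hw => hnn z hz w hw) hxS

theorem stmt_15 (V : Type*) [Fintype V] [DecidableEq V] [Nonempty V]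
    (c : V → V → ℝ) (hsym : ∀ x y, c x y = c y x) (hnonneg : ∀ x y, 0 ≤ c x y)
    (hconn : (SimpleGraph.fromRel fun x y => 0 < c x y).Connected)
    (V₀ : Finset V) (u : V → ℝ)
    (hharm : ∀ x, x ∉ V₀ → ∑ y, c x y * (u x - u y) = 0)
    (hbdry : ∀ x ∈ V₀, u x = 0 ∨ u x = 1) :
    ∀ x y, c x y * |u x - u y| ≤ (1 / 2) * ∑ x, ∑ y, c x y * (u x - u y) ^ 2 := by
  intro x y
  have Enn' : ∀ p q : V, 0 ≤ c p q * (u p - u q) ^ 2 := fun p q =>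
    mul_nonneg (hnonneg p q) (sq_nonneg _)
  have Enn : 0 ≤ (1 / 2) * ∑ p, ∑ q, c p q * (u p - u q) ^ 2 :=
    mul_nonneg (by norm_num)
      (Finset.sum_nonneg fun p _ => Finset.sum_nonneg fun q _ => Enn' p q)
  rcases Finset.eq_empty_or_nonempty V₀ with hemp | hne
  · -- V₀ empty : u is harmonic everywhere, hence no current flows
    have hall : ∀ p : V, ∑ w, c p w * (u p - u w) = 0 := fun p =>
      hharm p (by simp [hemp])
    have hE : ∑ p, ∑ q, c p q * (u p - u q) ^ 2 = 0 := by
      rw [energy_eq c hsym u]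
      simp [hall]
    have hterm : c x y * (u x - u y) ^ 2 = 0 := by
      have h1 := (Finset.sum_eq_zero_iff_of_nonneg
        (fun p _ => Finset.sum_nonneg fun q _ => Enn' p q)).mp hE x (mem_univ x)
      exact (Finset.sum_eq_zero_iff_of_nonneg (fun q _ => Enn' x q)).mp h1
        y (mem_univ y)
    have hz : c x y * |u x - u y| = 0 := by
      rcases mul_eq_zero.mp hterm with h | h
      · rw [h, zero_mul]
      · have : u x - u y = 0 := by
          have := sq_eq_zero_iff.mp h
          exact this
        rw [this, abs_zero, mul_zero]
    linarith
  · -- V₀ nonempty : maximum principle gives 0 ≤ u ≤ 1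
    obtain ⟨w₁, hw₁, hmax⟩ := exists_boundary_max c hsym hnonneg hconn V₀ u hharm hne
    have h1 : ∀ z, u z ≤ 1 := by
      intro z
      rcases hbdry w₁ hw₁ with h | h <;> [skip; skip] <;> have := hmax z <;> linarith
    have hharm' : ∀ p, p ∉ V₀ → ∑ w, c p w * ((1 - u p) - (1 - u w)) = 0 := by
      intro p hp
      have heq : ∑ w, c p w * ((1 - u p) - (1 - u w))
          = - ∑ w, c p w * (u p - u w) := by
        rw [← Finset.sum_neg_distrib]
        exact Finset.sum_congr rfl fun w _ => by ring
      rw [heq, hharm p hp, neg_zero]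
    obtain ⟨w₂, hw₂, hmin⟩ := exists_boundary_max c hsym hnonneg hconn V₀
      (fun z => 1 - u z) hharm' hne
    have h0 : ∀ z, 0 ≤ u z := by
      intro z
      rcases hbdry w₂ hw₂ with h | h <;> have := hmin z <;> linarith
    have hgoal : (1 / 2) * ∑ p, ∑ q, c p q * (u p - u q) ^ 2
        = ∑ z, u z * ∑ w, c z w * (u z - u w) := by
      rw [energy_eq c hsym u]; ring
    rw [hgoal]
    rcases lt_trichotomy (u x) (u y) with hlt | heq | hgt
    · have habs : |u x - u y| = u y - u x := by
        rw [abs_sub_comm]; exact abs_of_pos (by linarith)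
      rw [habs, hsym x y]
      exact core_ineq c hsym hnonneg V₀ u hharm hbdry h0 h1 y x hlt
    · rw [heq, sub_self, abs_zero, mul_zero]
      rw [← hgoal]; exact Enn
    · have habs : |u x - u y| = u x - u y := abs_of_pos (by linarith)
      rw [habs]
      exact core_ineq c hsym hnonneg V₀ u hharm hbdry h0 h1 x y hgt
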